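/- arXiv:2001.05977 — 5 statements merged into one kernel-verified Lean document; each statement's English description precedes it below -/
import Mathlib

section
/- P(G < N) = (1−ζ) · E[min(N, G+1)], where G < N is the event that the geometric variable G is strictly smaller than N (in the order of ℕ∞), and the expectation is the Lebesgue integral in [0,∞]. (This is the random-variable core of Theorem 2(2): for any fixed strategy, the probability of reaching the target t in the augmented MDP M^ζ equals (1−ζ) times the expected total reward, i.e. the expected number of accepting transitions taken, in the augmented MDP with undiscounted reward.) -/
open MeasureTheory ProbabilityTheory
open scoped ENNReal

/-- `ζ ^ n` for an extended natural number `n`, with the convention `ζ ^ ∞ = 0`. -/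
noncomputable def epow (ζ : ℝ≥0∞) (n : ℕ∞) : ℝ≥0∞ :=
  if n = ⊤ then 0 else ζ ^ n.toNat

/-- `∑_{i=0}^{n-1} ζ ^ i` for an extended natural number `n`, where for `n = ∞`
the sum is interpreted as the full geometric series `1 / (1 - ζ)`. -/
noncomputable def geomSum (ζ : ℝ≥0∞) (n : ℕ∞) : ℝ≥0∞ :=
  if n = ⊤ then (1 - ζ)⁻¹ else ∑ i ∈ Finset.range n.toNat, ζ ^ i

lemma enat_coe_eq_tsum (m : ℕ∞) :
    (m : ℝ≥0∞) = ∑' n : ℕ, (if (n : ℕ∞) < m then (1 : ℝ≥0∞) else 0) := by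
  cases m with
  | top =>
    have h : ∀ n : ℕ, (if (n : ℕ∞) < ⊤ then (1 : ℝ≥0∞) else 0) = 1 := fun n =>
      if_pos (by simp)
    simp only [h]
    rw [ENNReal.tsum_const_eq_top_of_ne_zero one_ne_zero]
    simp
  | coe k =>
    rw [tsum_eq_sum (s := Finset.range k) (fun n hn => by
      rw [if_neg]
      exact fun hlt => hn (Finset.mem_range.mpr (Nat.cast_lt.mp hlt)))]
    have h : ∀ n ∈ Finset.range k, (if (n : ℕ∞) < (k : ℕ∞) then (1 : ℝ≥0∞) else 0) = 1 :=
      fun n hn => if_pos (Nat.cast_lt.mpr (Finset.mem_range.mp hn))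
    rw [Finset.sum_congr rfl h]
    simp

lemma lintegral_enat_eq_tsum {Ω : Type*} [MeasurableSpace Ω] (μ : Measure Ω) (f : Ω → ℕ∞)
    (hf : ∀ n : ℕ, MeasurableSet {ω | (n : ℕ∞) < f ω}) :
    ∫⁻ ω, (f ω : ℝ≥0∞) ∂μ = ∑' n : ℕ, μ {ω | (n : ℕ∞) < f ω} := by
  have h : ∀ ω, (f ω : ℝ≥0∞)
      = ∑' n : ℕ, Set.indicator {ω | (n : ℕ∞) < f ω} (fun _ => (1 : ℝ≥0∞)) ω := by
    intro ω
    rw [enat_coe_eq_tsum]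
    congr 1
    ext n
    simp [Set.indicator_apply]
  calc ∫⁻ ω, (f ω : ℝ≥0∞) ∂μ
      = ∫⁻ ω, ∑' n : ℕ, Set.indicator {ω | (n : ℕ∞) < f ω} (fun _ => (1 : ℝ≥0∞)) ω ∂μ := by
        exact lintegral_congr h
    _ = ∑' n : ℕ, ∫⁻ ω, Set.indicator {ω | (n : ℕ∞) < f ω} (fun _ => (1 : ℝ≥0∞)) ω ∂μ :=
        lintegral_tsum fun n => (measurable_const.indicator (hf n)).aemeasurable
    _ = ∑' n : ℕ, μ {ω | (n : ℕ∞) < f ω} := by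
        refine tsum_congr fun n => ?_
        exact lintegral_indicator_one (hf n)

/-- `P(G < N) = (1 − ζ) · E[min(N, G+1)]` for a geometric `G` independent of `N`. -/
theorem reach_eq_one_sub_zeta_mul_expected_total
    {Ω : Type*} [MeasurableSpace Ω] (μ : Measure Ω) [IsProbabilityMeasure μ]
    (ζ : ℝ≥0∞) (hζ0 : 0 < ζ) (hζ1 : ζ < 1)
    (N : Ω → ℕ∞) (hN : Measurable N)
    (G : Ω → ℕ) (hG : Measurable G)
    (hGeom : ∀ k : ℕ, μ {ω | G ω = k} = (1 - ζ) * ζ ^ k)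
    (hIndep : IndepFun G N μ) :
    μ {ω | (G ω : ℕ∞) < N ω} =
      (1 - ζ) * ∫⁻ ω, (↑(min (N ω) ((G ω : ℕ∞) + 1)) : ℝ≥0∞) ∂μ := by
  have h1ζ0 : (1 - ζ) ≠ 0 := by
    simp only [ne_eq, tsub_eq_zero_iff_le, not_le]
    exact hζ1
  have h1ζtop : (1 - ζ) ≠ ⊤ := (ENNReal.sub_ne_top ENNReal.one_ne_top)
  -- independence of events
  have hind : ∀ (s : Set ℕ) (t : Set ℕ∞),
      μ (G ⁻¹' s ∩ N ⁻¹' t) = μ (G ⁻¹' s) * μ (N ⁻¹' t) := fun s t =>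
    hIndep.measure_inter_preimage_eq_mul s t .of_discrete .of_discrete
  -- measure of upper tail of G
  have hGge : ∀ i : ℕ, μ {ω | i ≤ G ω} = ζ ^ i := by
    intro i
    have hset : {ω | i ≤ G ω} = ⋃ j : ℕ, {ω | G ω = i + j} := by
      ext ω
      simp only [Set.mem_setOf_eq, Set.mem_iUnion]
      constructor
      · intro h; exact ⟨G ω - i, by omega⟩
      · rintro ⟨j, hj⟩; omega
    have hdisj : Pairwise (Function.onFun Disjoint fun j : ℕ => {ω | G ω = i + j}) := by
      intro a b hab
      refine Set.disjoint_left.mpr fun ω ha hb => ?_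
      simp only [Set.mem_setOf_eq] at ha hb
      omega
    rw [hset, measure_iUnion hdisj fun j => hG (MeasurableSet.of_discrete (s := ({i + j} : Set ℕ)))]
    have : ∀ j : ℕ, μ {ω | G ω = i + j} = ((1 - ζ) * ζ ^ i) * ζ ^ j := by
      intro j
      rw [hGeom (i + j), pow_add, mul_assoc]
    simp_rw [this]
    rw [ENNReal.tsum_mul_left, ENNReal.tsum_geometric, mul_comm (1 - ζ) (ζ ^ i), mul_assoc,
      ENNReal.mul_inv_cancel h1ζ0 h1ζtop, mul_one]
  -- LHS:  P(G < N) = ∑ₖ (1-ζ) ζ^k  P(N > k)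
  have hLHS : μ {ω | (G ω : ℕ∞) < N ω}
      = ∑' k : ℕ, (1 - ζ) * ζ ^ k * μ {ω | (k : ℕ∞) < N ω} := by
    have hset : {ω | (G ω : ℕ∞) < N ω}
        = ⋃ k : ℕ, (G ⁻¹' {k} ∩ N ⁻¹' Set.Ioi (k : ℕ∞)) := by
      ext ω
      simp only [Set.mem_setOf_eq, Set.mem_iUnion, Set.mem_inter_iff, Set.mem_preimage,
        Set.mem_singleton_iff, Set.mem_Ioi]
      exact ⟨fun h => ⟨G ω, rfl, h⟩, fun ⟨k, hk, h⟩ => hk ▸ h⟩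
    have hdisj : Pairwise (Function.onFun Disjoint
        fun k : ℕ => G ⁻¹' {k} ∩ N ⁻¹' Set.Ioi (k : ℕ∞)) := by
      intro a b hab
      refine Set.disjoint_left.mpr fun ω ha hb => ?_
      exact hab (ha.1.symm.trans hb.1)
    rw [hset, measure_iUnion hdisj fun k =>
      ((hG .of_discrete).inter (hN .of_discrete))]
    refine tsum_congr fun k => ?_
    rw [hind {k} (Set.Ioi (k : ℕ∞))]
    have hg : G ⁻¹' {k} = {ω | G ω = k} := rfl
    have hn : N ⁻¹' Set.Ioi (k : ℕ∞) = {ω | (k : ℕ∞) < N ω} := rfl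
    rw [hg, hn, hGeom k]
  -- RHS integral
  have hRHS : ∫⁻ ω, (↑(min (N ω) ((G ω : ℕ∞) + 1)) : ℝ≥0∞) ∂μ
      = ∑' i : ℕ, ζ ^ i * μ {ω | (i : ℕ∞) < N ω} := by
    have hset : ∀ i : ℕ, {ω | (i : ℕ∞) < min (N ω) ((G ω : ℕ∞) + 1)}
        = G ⁻¹' {k | i ≤ k} ∩ N ⁻¹' Set.Ioi (i : ℕ∞) := by
      intro i
      ext ω
      simp only [Set.mem_setOf_eq, lt_min_iff, Set.mem_inter_iff, Set.mem_preimage, Set.mem_Ioi]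
      have : ((i : ℕ∞) < (G ω : ℕ∞) + 1) ↔ i ≤ G ω := by
        rw [← Nat.cast_one, ← Nat.cast_add, Nat.cast_lt]
        omega
      rw [this]
      tauto
    rw [lintegral_enat_eq_tsum μ _ (fun i => by
      rw [hset i]
      exact (hG .of_discrete).inter (hN .of_discrete))]
    refine tsum_congr fun i => ?_
    rw [hset i, hind {k | i ≤ k} (Set.Ioi (i : ℕ∞))]
    have hg : μ (G ⁻¹' {k | i ≤ k}) = ζ ^ i := hGge i
    rw [hg]
    rfl
  rw [hLHS, hRHS, ← ENNReal.tsum_mul_left]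
  exact tsum_congr fun k => mul_assoc _ _ _
end

section
/- E[min(N, G+1)] = E[∑_{i=0}^{N−1} ζ^i], where for N = ∞ the sum is interpreted as ∑_{i=0}^{∞} ζ^i = 1/(1−ζ). (Random-variable core of the paper's final theorem: for every strategy, the expected undiscounted total reward in the augmented MDP equals the expected ζ-biased discounted reward in the product MDP, where the i-th accepting transition of a run earns reward ζ^i.) -/
open MeasureTheory ProbabilityTheory
open scoped ENNReal

/-- Layer-cake representation of `geomSum`. -/
lemma geomSum_eq_tsum (ζ : ℝ≥0∞) (n : ℕ∞) :
    geomSum ζ n = ∑' i : ℕ, if (i : ℕ∞) < n then ζ ^ i else 0 := by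
  induction n using ENat.recTopCoe with
  | top =>
    have h : ∀ i : ℕ, (i : ℕ∞) < ⊤ := fun i => lt_top_iff_ne_top.mpr (by simp)
    simp only [geomSum, if_pos rfl, h, if_true]
    exact (ENNReal.tsum_geometric ζ).symm
  | coe k =>
    have hne : (k : ℕ∞) ≠ ⊤ := by simp
    rw [geomSum, if_neg hne, tsum_eq_sum (s := Finset.range k)
      (by intro i hi; rw [if_neg]; simpa using Finset.mem_range.not.mp hi)]
    apply Finset.sum_congr (by simp)
    intro i hi
    rw [if_pos (by exact_mod_cast Finset.mem_range.mp hi)]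

/-- Layer-cake representation of the coercion `ℕ∞ → ℝ≥0∞`. -/
lemma coe_enat_eq_tsum (n : ℕ∞) :
    (n : ℝ≥0∞) = ∑' i : ℕ, if (i : ℕ∞) < n then (1 : ℝ≥0∞) else 0 := by
  induction n using ENat.recTopCoe with
  | top =>
    have h : ∀ i : ℕ, (i : ℕ∞) < ⊤ := fun i => lt_top_iff_ne_top.mpr (by simp)
    simp only [h, if_true]
    rw [ENNReal.tsum_const_eq_top_of_ne_zero one_ne_zero]
    simp
  | coe k =>
    rw [tsum_eq_sum (s := Finset.range k)
      (by intro i hi; rw [if_neg]; simpa using Finset.mem_range.not.mp hi)]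
    have : ∀ i ∈ Finset.range k, (if (i : ℕ∞) < (k : ℕ∞) then (1:ℝ≥0∞) else 0) = 1 := by
      intro i hi
      rw [if_pos (by exact_mod_cast Finset.mem_range.mp hi)]
    rw [Finset.sum_congr rfl this]
    simp

/-- `E[min(N, G+1)] = E[∑_{i=0}^{N−1} ζ^i]`, where for `N = ∞` the sum is the full
geometric series `1 / (1 − ζ)`. -/
theorem expected_total_eq_expected_discounted
    {Ω : Type*} [MeasurableSpace Ω] (μ : Measure Ω) [IsProbabilityMeasure μ]
    (ζ : ℝ≥0∞) (hζ0 : 0 < ζ) (hζ1 : ζ < 1)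
    (N : Ω → ℕ∞) (hN : Measurable N)
    (G : Ω → ℕ) (hG : Measurable G)
    (hGeom : ∀ k : ℕ, μ {ω | G ω = k} = (1 - ζ) * ζ ^ k)
    (hIndep : IndepFun G N μ) :
    ∫⁻ ω, (↑(min (N ω) ((G ω : ℕ∞) + 1)) : ℝ≥0∞) ∂μ =
      ∫⁻ ω, geomSum ζ (N ω) ∂μ := by
  -- The measurable events
  have hAmeas : ∀ i : ℕ, MeasurableSet {ω | (i : ℕ∞) < N ω} := by
    intro i
    exact hN ((Set.to_countable (Set.Ioi (i : ℕ∞))).measurableSet)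
  have hBmeas : ∀ i : ℕ, MeasurableSet {ω | i ≤ G ω} :=
    fun i => hG measurableSet_Ici
  -- Geometric tail: μ {i ≤ G} = ζ ^ i
  have hTail : ∀ i : ℕ, μ {ω | i ≤ G ω} = ζ ^ i := by
    intro i
    have hU : {ω | i ≤ G ω} = ⋃ k : ℕ, {ω | G ω = i + k} := by
      ext ω
      simp only [Set.mem_setOf_eq, Set.mem_iUnion]
      constructor
      · intro h; exact ⟨G ω - i, by omega⟩
      · rintro ⟨k, hk⟩; omega
    have hdisj : Pairwise (Function.onFun Disjoint fun k : ℕ => {ω | G ω = i + k}) := by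
      intro a b hab
      simp only [Function.onFun, Set.disjoint_left, Set.mem_setOf_eq]
      intro ω h1 h2; omega
    have hmeas : ∀ k : ℕ, MeasurableSet {ω | G ω = i + k} :=
      fun k => hG (measurableSet_singleton (i + k))
    rw [hU, measure_iUnion hdisj hmeas]
    have : ∀ k : ℕ, μ {ω | G ω = i + k} = (1 - ζ) * ζ ^ (i + k) := fun k => hGeom (i + k)
    simp_rw [this, pow_add]
    have h1 : (1 : ℝ≥0∞) - ζ ≠ 0 := (tsub_pos_of_lt hζ1).ne'
    have h2 : (1 : ℝ≥0∞) - ζ ≠ ⊤ := ne_top_of_le_ne_top ENNReal.one_ne_top tsub_le_self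
    calc ∑' k : ℕ, (1 - ζ) * (ζ ^ i * ζ ^ k)
        = (1 - ζ) * (ζ ^ i * ∑' k : ℕ, ζ ^ k) := by
          rw [ENNReal.tsum_mul_left, ENNReal.tsum_mul_left]
      _ = (1 - ζ) * (ζ ^ i * (1 - ζ)⁻¹) := by rw [ENNReal.tsum_geometric]
      _ = ((1 - ζ) * (1 - ζ)⁻¹) * ζ ^ i := by ring
      _ = ζ ^ i := by rw [ENNReal.mul_inv_cancel h1 h2, one_mul]
  -- Rewrite the left integrand via the layer cake
  have hLpt : ∀ ω, (↑(min (N ω) ((G ω : ℕ∞) + 1)) : ℝ≥0∞) =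
      ∑' i : ℕ, ({ω' | (i : ℕ∞) < N ω'} ∩ {ω' | i ≤ G ω'}).indicator
        (fun _ => (1 : ℝ≥0∞)) ω := by
    intro ω
    rw [coe_enat_eq_tsum]
    congr 1
    ext i
    have hcond : ((i : ℕ∞) < min (N ω) ((G ω : ℕ∞) + 1)) ↔
        ((i : ℕ∞) < N ω ∧ i ≤ G ω) := by
      rw [lt_min_iff]
      constructor
      · rintro ⟨h1, h2⟩
        refine ⟨h1, ?_⟩
        have : (i : ℕ∞) < ((G ω + 1 : ℕ) : ℕ∞) := by push_cast; exact h2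
        exact Nat.lt_succ_iff.mp (by exact_mod_cast this)
      · rintro ⟨h1, h2⟩
        refine ⟨h1, ?_⟩
        have : (i : ℕ∞) < ((G ω + 1 : ℕ) : ℕ∞) := by exact_mod_cast Nat.lt_succ_iff.mpr h2
        push_cast at this; exact this
    by_cases h : (i : ℕ∞) < N ω ∧ i ≤ G ω
    · rw [if_pos (hcond.mpr h), Set.indicator_of_mem (by exact h)]
    · rw [if_neg (fun hc => h (hcond.mp hc)), Set.indicator_of_notMem (by exact h)]
  have hRpt : ∀ ω, geomSum ζ (N ω) =
      ∑' i : ℕ, ({ω' | (i : ℕ∞) < N ω'}).indicator (fun _ => ζ ^ i) ω := by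
    intro ω
    rw [geomSum_eq_tsum]
    congr 1
    ext i
    by_cases h : (i : ℕ∞) < N ω
    · rw [if_pos h, Set.indicator_of_mem (by exact h)]
    · rw [if_neg h, Set.indicator_of_notMem (by exact h)]
  simp_rw [hLpt, hRpt]
  rw [lintegral_tsum (fun i => ((measurable_const).indicator
        ((hAmeas i).inter (hBmeas i))).aemeasurable),
      lintegral_tsum (fun i => ((measurable_const).indicator (hAmeas i)).aemeasurable)]
  congr 1
  ext i
  rw [lintegral_indicator_const ((hAmeas i).inter (hBmeas i)),
      lintegral_indicator_const (hAmeas i), one_mul]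
  have hsets : {ω | (i : ℕ∞) < N ω} ∩ {ω | i ≤ G ω} =
      G ⁻¹' Set.Ici i ∩ N ⁻¹' Set.Ioi (i : ℕ∞) := by
    ext ω; simp [Set.mem_Ici, Set.mem_Ioi, and_comm]
  rw [hsets, hIndep.measure_inter_preimage_eq_mul _ _ measurableSet_Ici
        ((Set.to_countable (Set.Ioi (i : ℕ∞))).measurableSet)]
  have : G ⁻¹' Set.Ici i = {ω | i ≤ G ω} := rfl
  rw [this, hTail i]
  rfl
end

section
/- E[min(N, G+1)] = 1/(1−ζ) if and only if P(N = ∞) = 1. (Theorem 2(4): the chance of satisfying the Büchi objective in the product MDP under a fixed strategy, i.e. the probability that infinitely many accepting transitions occur, is 1 if and only if the expected total reward in the augmented MDP under that strategy equals 1/(1−ζ).) -/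
open MeasureTheory ProbabilityTheory
open scoped ENNReal

/-- An extended natural number, cast to `ℝ≥0∞`, equals the sum of its tail indicators. -/
lemma encast_eq_tsum_ite (n : ℕ∞) :
    (n : ℝ≥0∞) = ∑' k : ℕ, if (k : ℕ∞) < n then 1 else 0 := by
  induction n using ENat.recTopCoe with
  | top =>
    simp only [ENat.coe_lt_top, if_true, ENat.toENNReal_top]
    exact (ENNReal.tsum_const_eq_top_of_ne_zero one_ne_zero).symm
  | coe m =>
    have : ∀ k : ℕ, (if (k : ℕ∞) < (m : ℕ∞) then (1:ℝ≥0∞) else 0) = if k < m then 1 else 0 := by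
      intro k; simp [Nat.cast_lt]
    simp_rw [this]
    rw [tsum_eq_sum (s := Finset.range m) (by intro k hk; simp [Finset.mem_range] at hk; simp [hk])]
    rw [Finset.sum_congr rfl (fun b hb => if_pos (Finset.mem_range.mp hb))]; simp

/-- `E[min(N, G+1)] = 1 / (1 − ζ)` if, and only if, `P(N = ∞) = 1`. -/
theorem expected_total_eq_iff_buchi_almost_sure
    {Ω : Type*} [MeasurableSpace Ω] (μ : Measure Ω) [IsProbabilityMeasure μ]
    (ζ : ℝ≥0∞) (hζ0 : 0 < ζ) (hζ1 : ζ < 1)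
    (N : Ω → ℕ∞) (hN : Measurable N)
    (G : Ω → ℕ) (hG : Measurable G)
    (hGeom : ∀ k : ℕ, μ {ω | G ω = k} = (1 - ζ) * ζ ^ k)
    (hIndep : IndepFun G N μ) :
    ∫⁻ ω, (↑(min (N ω) ((G ω : ℕ∞) + 1)) : ℝ≥0∞) ∂μ = (1 - ζ)⁻¹ ↔
      μ {ω | N ω = ⊤} = 1 := by
  have hζtop : ζ ≠ ⊤ := (hζ1.trans ENNReal.one_lt_top).ne
  have h1ζ0 : (1 : ℝ≥0∞) - ζ ≠ 0 := by
    simpa [tsub_eq_zero_iff_le] using hζ1.not_ge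
  have h1ζtop : (1 : ℝ≥0∞) - ζ ≠ ⊤ := by
    exact (tsub_le_self.trans_lt ENNReal.one_lt_top).ne
  have hζkne : ∀ k : ℕ, ζ ^ k ≠ 0 := fun k => pow_ne_zero k hζ0.ne'
  have hζktop : ∀ k : ℕ, ζ ^ k ≠ ⊤ := fun k => ENNReal.pow_ne_top hζtop
  -- measurable sets
  have hmNk : ∀ k : ℕ, MeasurableSet {n : ℕ∞ | (k : ℕ∞) < n} :=
    fun k => (Set.to_countable _).measurableSet
  have hmN : ∀ k : ℕ, MeasurableSet {ω | (k : ℕ∞) < N ω} := fun k => hN (hmNk k)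
  -- the key set identity
  have hset : ∀ k : ℕ, {ω | (k : ℕ∞) < min (N ω) ((G ω : ℕ∞) + 1)}
      = G ⁻¹' (Set.Ici k) ∩ N ⁻¹' {n : ℕ∞ | (k : ℕ∞) < n} := by
    intro k
    ext ω
    have hcast : ((G ω : ℕ∞) + 1) = ((G ω + 1 : ℕ) : ℕ∞) := by push_cast; ring
    simp only [Set.mem_setOf_eq, lt_min_iff, Set.mem_inter_iff, Set.mem_preimage, Set.mem_Ici,
      hcast, Nat.cast_lt, Nat.lt_succ_iff]
    tauto
  -- geometric tail probabilities
  have hGtail : ∀ k : ℕ, μ (G ⁻¹' (Set.Ici k)) = ζ ^ k := by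
    intro k
    have hU : G ⁻¹' (Set.Ici k) = ⋃ j : ℕ, G ⁻¹' {k + j} := by
      ext ω
      simp only [Set.mem_preimage, Set.mem_Ici, Set.mem_iUnion, Set.mem_singleton_iff]
      constructor
      · intro h; exact ⟨G ω - k, (Nat.add_sub_cancel' h).symm⟩
      · rintro ⟨j, hj⟩; omega
    have hdisj : Pairwise (Function.onFun Disjoint fun j : ℕ => G ⁻¹' {k + j}) := by
      intro i j hij
      refine Set.disjoint_left.2 fun ω hi hj => ?_
      simp only [Set.mem_preimage, Set.mem_singleton_iff] at hi hj
      omega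
    rw [hU, measure_iUnion hdisj (fun j => hG (measurableSet_singleton _))]
    have hsum : ∀ j : ℕ, μ (G ⁻¹' {k + j}) = (1 - ζ) * (ζ ^ k * ζ ^ j) := by
      intro j
      have : G ⁻¹' {k + j} = {ω | G ω = k + j} := rfl
      rw [this, hGeom, pow_add]
    simp_rw [hsum]
    rw [ENNReal.tsum_mul_left, ENNReal.tsum_mul_left, ENNReal.tsum_geometric]
    calc (1 - ζ) * (ζ ^ k * (1 - ζ)⁻¹) = ζ ^ k * ((1 - ζ) * (1 - ζ)⁻¹) := by ring
    _ = ζ ^ k := by rw [ENNReal.mul_inv_cancel h1ζ0 h1ζtop, mul_one]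
  -- the main formula for the expectation
  have hmain : ∫⁻ ω, (↑(min (N ω) ((G ω : ℕ∞) + 1)) : ℝ≥0∞) ∂μ
      = ∑' k : ℕ, ζ ^ k * μ {ω | (k : ℕ∞) < N ω} := by
    have h1 : ∀ ω, (↑(min (N ω) ((G ω : ℕ∞) + 1)) : ℝ≥0∞)
        = ∑' k : ℕ, Set.indicator {ω' | (k : ℕ∞) < min (N ω') ((G ω' : ℕ∞) + 1)}
            (fun _ => (1 : ℝ≥0∞)) ω := by
      intro ω
      rw [encast_eq_tsum_ite]
      congr 1
      ext k
      rw [Set.indicator_apply]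
      rfl
    rw [lintegral_congr h1]
    have hmeas : ∀ k : ℕ, MeasurableSet {ω' | (k : ℕ∞) < min (N ω') ((G ω' : ℕ∞) + 1)} := by
      intro k
      rw [hset k]
      exact (hG measurableSet_Ici).inter (hmN k)
    rw [lintegral_tsum (fun k => ((measurable_const.indicator (hmeas k)).aemeasurable))]
    congr 1
    ext k
    rw [lintegral_indicator (hmeas k), setLIntegral_one, hset k,
      hIndep.measure_inter_preimage_eq_mul _ _ measurableSet_Ici (hmNk k), hGtail k]
    rfl
  rw [hmain]
  constructor
  · -- expectation equals the full geometric series ⇒ N = ∞ a.s.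
    intro h
    have hall : ∀ k : ℕ, μ {ω | (k : ℕ∞) < N ω} = 1 := by
      intro k
      by_contra hk
      have hk' : μ {ω | (k : ℕ∞) < N ω} < 1 := lt_of_le_of_ne prob_le_one hk
      have hle : ∀ j : ℕ, ζ ^ j * μ {ω | (j : ℕ∞) < N ω} ≤ ζ ^ j := by
        intro j
        calc ζ ^ j * μ {ω | (j : ℕ∞) < N ω} ≤ ζ ^ j * 1 := mul_le_mul_right prob_le_one _
        _ = ζ ^ j := mul_one _
      have hne : ∑' j : ℕ, ζ ^ j * μ {ω | (j : ℕ∞) < N ω} ≠ ⊤ := by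
        rw [h]; exact ENNReal.inv_ne_top.2 h1ζ0
      have hstrict : ζ ^ k * μ {ω | (k : ℕ∞) < N ω} < ζ ^ k := by
        calc ζ ^ k * μ {ω | (k : ℕ∞) < N ω} < ζ ^ k * 1 :=
          (ENNReal.mul_lt_mul_iff_right (hζkne k) (hζktop k)).2 hk'
        _ = ζ ^ k := mul_one _
      have := ENNReal.tsum_lt_tsum hne hle hstrict
      rw [h, ENNReal.tsum_geometric] at this
      exact lt_irrefl _ this
    have hnull : μ {ω | N ω ≠ ⊤} = 0 := by
      have hsub : {ω | N ω ≠ ⊤} ⊆ ⋃ k : ℕ, {ω | (k : ℕ∞) < N ω}ᶜ := by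
        intro ω hω
        lift N ω to ℕ using hω with m hm
        exact Set.mem_iUnion.2 ⟨m, by simp [← hm]⟩
      refine measure_mono_null hsub (measure_iUnion_null fun k => ?_)
      rw [prob_compl_eq_zero_iff (hmN k)]
      exact hall k
    refine (prob_compl_eq_zero_iff (hN (measurableSet_singleton ⊤))).mp ?_
    have : (N ⁻¹' {⊤})ᶜ = {ω | N ω ≠ ⊤} := by ext ω; simp
    rw [this]
    exact hnull
  · -- N = ∞ a.s. ⇒ expectation equals the full geometric series
    intro h
    have hone : ∀ k : ℕ, μ {ω | (k : ℕ∞) < N ω} = 1 := by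
      intro k
      refine le_antisymm prob_le_one ?_
      rw [← h]
      refine measure_mono fun ω hω => ?_
      simp only [Set.mem_setOf_eq] at hω ⊢
      rw [hω]
      exact ENat.coe_lt_top k
    simp_rw [hone, mul_one]
    exact ENNReal.tsum_geometric ζ
end

section
/- P(G < N) = 1 if and only if P(N = ∞) = 1. (Random-variable core of Theorem 1(2): for a fixed strategy, the chance of reaching the target t in the augmented MDP M^ζ is 1 if and only if the chance of satisfying the Büchi objective, i.e. seeing infinitely many accepting transitions, in the product MDP is 1.) -/
open MeasureTheory ProbabilityTheory
open scoped ENNReal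

/-- `P(G < N) = 1` if, and only if, `P(N = ∞) = 1`. -/
theorem reach_almost_sure_iff_buchi_almost_sure
    {Ω : Type*} [MeasurableSpace Ω] (μ : Measure Ω) [IsProbabilityMeasure μ]
    (ζ : ℝ≥0∞) (hζ0 : 0 < ζ) (hζ1 : ζ < 1)
    (N : Ω → ℕ∞) (hN : Measurable N)
    (G : Ω → ℕ) (hG : Measurable G)
    (hGeom : ∀ k : ℕ, μ {ω | G ω = k} = (1 - ζ) * ζ ^ k)
    (hIndep : IndepFun G N μ) :
    μ {ω | (G ω : ℕ∞) < N ω} = 1 ↔ μ {ω | N ω = ⊤} = 1 := by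
  constructor
  · intro h
    by_contra hne
    -- there is some finite value k with positive probability
    have hmNtop : MeasurableSet {ω | N ω = ⊤} := hN (measurableSet_singleton ⊤)
    have hcompl : μ {ω | N ω = ⊤}ᶜ ≠ 0 := by
      intro h0
      exact hne ((prob_compl_eq_zero_iff hmNtop).mp h0)
    have hU : {ω | N ω = ⊤}ᶜ = ⋃ k : ℕ, {ω | N ω = (k : ℕ∞)} := by
      ext ω
      simp only [Set.mem_compl_iff, Set.mem_setOf_eq, Set.mem_iUnion]
      constructor
      · intro hneq
        obtain ⟨k, hk⟩ := WithTop.ne_top_iff_exists.mp hneq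
        exact ⟨k, hk.symm⟩
      · rintro ⟨k, hk⟩
        simp [hk]
    rw [hU] at hcompl
    obtain ⟨k, hk⟩ : ∃ k : ℕ, μ {ω | N ω = (k : ℕ∞)} ≠ 0 := by
      by_contra hall
      push_neg at hall
      exact hcompl (measure_iUnion_null hall)
    -- the event A = {G = k} ∩ {N = k}
    have hA : μ (G ⁻¹' {k} ∩ N ⁻¹' {(k : ℕ∞)}) =
        μ (G ⁻¹' {k}) * μ (N ⁻¹' {(k : ℕ∞)}) :=
      hIndep.measure_inter_preimage_eq_mul _ _ (measurableSet_singleton _)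
        (measurableSet_singleton _)
    have hApos : μ (G ⁻¹' {k} ∩ N ⁻¹' {(k : ℕ∞)}) ≠ 0 := by
      rw [hA]
      have hGk : μ (G ⁻¹' {k}) = (1 - ζ) * ζ ^ k := hGeom k
      have h1 : (1 - ζ) ≠ 0 := by
        simpa [tsub_eq_zero_iff_le] using hζ1.not_ge
      have h2 : ζ ^ k ≠ 0 := pow_ne_zero k hζ0.ne'
      rw [hGk]
      exact mul_ne_zero (mul_ne_zero h1 h2) hk
    -- but A ⊆ {G < N}ᶜ
    have hsub : {ω | (G ω : ℕ∞) < N ω} ⊆ (G ⁻¹' {k} ∩ N ⁻¹' {(k : ℕ∞)})ᶜ := by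
      intro ω hω
      simp only [Set.mem_compl_iff, Set.mem_inter_iff, Set.mem_preimage,
        Set.mem_singleton_iff, not_and]
      intro hGω hNω
      rw [Set.mem_setOf_eq, hGω, hNω] at hω
      exact lt_irrefl _ hω
    have hle : (1 : ℝ≥0∞) ≤ μ (G ⁻¹' {k} ∩ N ⁻¹' {(k : ℕ∞)})ᶜ :=
      h ▸ measure_mono hsub
    have hone : μ (G ⁻¹' {k} ∩ N ⁻¹' {(k : ℕ∞)})ᶜ = 1 :=
      le_antisymm prob_le_one hle
    have hmA : MeasurableSet (G ⁻¹' {k} ∩ N ⁻¹' {(k : ℕ∞)}) :=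
      (hG (measurableSet_singleton _)).inter (hN (measurableSet_singleton _))
    exact hApos ((prob_compl_eq_one_iff hmA).mp hone)
  · intro h
    have hsub : {ω | N ω = ⊤} ⊆ {ω | (G ω : ℕ∞) < N ω} := by
      intro ω hω
      rw [Set.mem_setOf_eq, hω]
      exact WithTop.coe_lt_top _
    exact le_antisymm prob_le_one (h ▸ measure_mono hsub)
end

section
/- There exists ζ₀ ∈ (0,1) such that for all ζ ∈ [ζ₀, 1) and all indices j: if j maximizes the function i ↦ 1 − E[ζ^{N_i}] over i ∈ {1,…,k}, then j also maximizes the function i ↦ P(N_i = ∞) over i ∈ {1,…,k}. (Finite-family core of Theorem 1(3) and Theorem 2(5): for ζ close enough to 1, a strategy maximizing the reachability value 1 − E[ζ^N] of the target in the augmented MDP also maximizes the probability P(N = ∞) of satisfying the Büchi objective; a finite MDP has finitely many relevant (positional) strategies, giving finitely many candidate distributions.) -/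
open MeasureTheory ProbabilityTheory
open scoped ENNReal

/-- The indicator of finiteness on ℕ∞. -/
noncomputable def efin (n : ℕ∞) : ℝ≥0∞ := if n = ⊤ then 0 else 1

/-- The sequence `1 - 1/n`, increasing to `1`. -/
noncomputable def zseq (n : ℕ) : ℝ≥0∞ := 1 - ((n : ℝ≥0∞))⁻¹

lemma zseq_lt_one (n : ℕ) : zseq n < 1 := by
  refine ENNReal.sub_lt_self ENNReal.one_ne_top one_ne_zero ?_
  simp [ENNReal.inv_eq_zero]

lemma zseq_mono : Monotone zseq := by
  intro a b hab
  exact tsub_le_tsub_left (ENNReal.inv_le_inv.2 (by exact_mod_cast hab)) 1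

lemma iSup_zseq : ⨆ n, zseq n = 1 := by
  have h0 : ⨅ n : ℕ, ((n : ℝ≥0∞))⁻¹ = 0 := by
    have hanti : Antitone fun n : ℕ => ((n : ℝ≥0∞))⁻¹ := fun a b hab =>
      ENNReal.inv_le_inv.2 (by exact_mod_cast hab)
    exact tendsto_nhds_unique (tendsto_atTop_iInf hanti) ENNReal.tendsto_inv_nat_nhds_zero
  simp [zseq, ← ENNReal.sub_iInf, h0]

lemma iSup_zseq_pow (t : ℕ) : ⨆ n, zseq n ^ t = 1 := by
  have h1 : Filter.Tendsto zseq Filter.atTop (nhds 1) := by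
    rw [← iSup_zseq]; exact tendsto_atTop_iSup zseq_mono
  have h2 : Filter.Tendsto (fun n => zseq n ^ t) Filter.atTop (nhds 1) := by
    have := ((ENNReal.continuous_pow t).tendsto 1).comp h1
    simpa [Function.comp_def] using this
  have hmono : Monotone fun n => zseq n ^ t := fun a b hab =>
    pow_le_pow_left' (zseq_mono hab) t
  exact tendsto_nhds_unique (tendsto_atTop_iSup hmono) h2

lemma epow_mono_left {ζ₁ ζ₂ : ℝ≥0∞} (h : ζ₁ ≤ ζ₂) (m : ℕ∞) :
    epow ζ₁ m ≤ epow ζ₂ m := by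
  unfold epow
  split
  · exact le_rfl
  · exact pow_le_pow_left' h _

lemma epow_le_efin {ζ : ℝ≥0∞} (hζ : ζ ≤ 1) (m : ℕ∞) : epow ζ m ≤ efin m := by
  unfold epow efin
  split
  · exact le_rfl
  · exact pow_le_one' hζ _

lemma iSup_epow_zseq (m : ℕ∞) : ⨆ n, epow (zseq n) m = efin m := by
  unfold epow efin
  by_cases hm : m = ⊤
  · simp [hm]
  · simp only [hm, if_false]
    exact iSup_zseq_pow m.toNat

section Integral

variable {Ω : Type*} [MeasurableSpace Ω] (μ : Measure Ω)

lemma lintegral_efin (Nj : Ω → ℕ∞) (hNj : Measurable Nj) :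
    ∫⁻ ω, efin (Nj ω) ∂μ = μ {ω | Nj ω ≠ ⊤} := by
  have hs : MeasurableSet {ω | Nj ω ≠ ⊤} :=
    (hNj (measurableSet_singleton ⊤)).compl
  rw [← MeasureTheory.lintegral_indicator_one hs]
  congr 1
  ext ω
  by_cases h : Nj ω = ⊤ <;> simp [efin, h, Set.indicator_apply]

lemma iSup_lintegral_epow_zseq (Nj : Ω → ℕ∞) (hNj : Measurable Nj) :
    ⨆ n, ∫⁻ ω, epow (zseq n) (Nj ω) ∂μ = μ {ω | Nj ω ≠ ⊤} := by
  rw [← MeasureTheory.lintegral_iSup (f := fun n ω => epow (zseq n) (Nj ω))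
      (fun n => ((measurable_of_countable (epow (zseq n))).comp hNj :
        Measurable fun ω => epow (zseq n) (Nj ω)))
      (fun a b hab ω => epow_mono_left (zseq_mono hab) (Nj ω))]
  simp_rw [iSup_epow_zseq]
  exact lintegral_efin μ Nj hNj

lemma lintegral_epow_le (Nj : Ω → ℕ∞) (hNj : Measurable Nj) {ζ : ℝ≥0∞} (hζ : ζ ≤ 1) :
    ∫⁻ ω, epow ζ (Nj ω) ∂μ ≤ μ {ω | Nj ω ≠ ⊤} := by
  rw [← lintegral_efin μ Nj hNj]
  exact lintegral_mono fun ω => epow_le_efin hζ (Nj ω)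

end Integral

/-- For a finite family `N_1, …, N_k` there is a threshold `ζ₀ ∈ (0,1)` such that for all
`ζ ∈ [ζ₀, 1)`, any index maximizing `i ↦ 1 − E[ζ^{N_i}]` also maximizes `i ↦ P(N_i = ∞)`. -/
theorem exists_zeta_threshold
    {Ω : Type*} [MeasurableSpace Ω] (μ : Measure Ω) [IsProbabilityMeasure μ]
    (k : ℕ) (hk : 1 ≤ k)
    (N : Fin k → Ω → ℕ∞) (hN : ∀ i, Measurable (N i)) :
    ∃ ζ₀ : ℝ≥0∞, 0 < ζ₀ ∧ ζ₀ < 1 ∧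
      ∀ ζ : ℝ≥0∞, ζ₀ ≤ ζ → ζ < 1 →
        ∀ j : Fin k,
          (∀ i : Fin k,
            1 - ∫⁻ ω, epow ζ (N i ω) ∂μ ≤ 1 - ∫⁻ ω, epow ζ (N j ω) ∂μ) →
          ∀ i : Fin k, μ {ω | N i ω = ⊤} ≤ μ {ω | N j ω = ⊤} := by
  classical
  set a : Fin k → ℝ≥0∞ := fun i => μ {ω | N i ω = ⊤} with ha
  set b : Fin k → ℝ≥0∞ := fun i => μ {ω | N i ω ≠ ⊤} with hb
  have hmeas : ∀ i, MeasurableSet {ω | N i ω = ⊤} :=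
    fun i => hN i (measurableSet_singleton ⊤)
  have hcompl : ∀ i, {ω | N i ω ≠ ⊤} = {ω | N i ω = ⊤}ᶜ := fun i => rfl
  have hb_eq : ∀ i, b i = 1 - a i := by
    intro i
    show μ {ω | N i ω ≠ ⊤} = 1 - μ {ω | N i ω = ⊤}
    rw [hcompl i, measure_compl (hmeas i) (measure_ne_top μ _), measure_univ]
  have ha_le : ∀ i, a i ≤ 1 := fun i => prob_le_one
  have hb_le : ∀ i, b i ≤ 1 := fun i => prob_le_one
  have ha_eq : ∀ i, a i = 1 - b i := by
    intro i
    rw [hb_eq i, ENNReal.sub_sub_cancel ENNReal.one_ne_top (ha_le i)]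
  -- the lower bound: 1 - ∫ epow ζ (N i) ≥ a i for ζ ≤ 1
  have lower : ∀ (i : Fin k) (ζ : ℝ≥0∞), ζ ≤ 1 →
      a i ≤ 1 - ∫⁻ ω, epow ζ (N i ω) ∂μ := by
    intro i ζ hζ
    rw [ha_eq i]
    exact tsub_le_tsub_left (lintegral_epow_le μ (N i) (hN i) hζ) 1
  -- per-pair thresholds
  have pairbound : ∀ i j : Fin k, ∃ ζp : ℝ≥0∞, ζp < 1 ∧
      (a j < a i →
        ∀ ζ : ℝ≥0∞, ζp ≤ ζ → ζ < 1 →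
          1 - ∫⁻ ω, epow ζ (N j ω) ∂μ < 1 - ∫⁻ ω, epow ζ (N i ω) ∂μ) := by
    intro i j
    by_cases hij : a j < a i
    · -- find n with 1 - ∫ epow (zseq n) (N j) < a i
      have hex : ∃ n : ℕ, 1 - ∫⁻ ω, epow (zseq n) (N j ω) ∂μ < a i := by
        by_contra hcon
        push_neg at hcon
        have hle : ∀ n, ∫⁻ ω, epow (zseq n) (N j ω) ∂μ ≤ 1 - a i := by
          intro n
          have h1 : ∫⁻ ω, epow (zseq n) (N j ω) ∂μ ≤ 1 := by
            calc ∫⁻ ω, epow (zseq n) (N j ω) ∂μ ≤ b j :=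
                  lintegral_epow_le μ (N j) (hN j) (zseq_lt_one n).le
              _ ≤ 1 := hb_le j
          have h2 : a i + ∫⁻ ω, epow (zseq n) (N j ω) ∂μ ≤ 1 := by
            calc a i + ∫⁻ ω, epow (zseq n) (N j ω) ∂μ
                ≤ (1 - ∫⁻ ω, epow (zseq n) (N j ω) ∂μ) + ∫⁻ ω, epow (zseq n) (N j ω) ∂μ :=
                  add_le_add (hcon n) le_rfl
              _ = 1 := tsub_add_cancel_of_le h1
          exact ENNReal.le_sub_of_add_le_left (measure_ne_top μ _) h2
        have hbj : b j ≤ 1 - a i := by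
          rw [show b j = ⨆ n, ∫⁻ ω, epow (zseq n) (N j ω) ∂μ from
            (iSup_lintegral_epow_zseq μ (N j) (hN j)).symm]
          exact iSup_le hle
        have : a i ≤ a j := by
          rw [ha_eq j]
          have h3 : b j + a i ≤ 1 := by
            calc b j + a i ≤ (1 - a i) + a i := add_le_add hbj le_rfl
              _ = 1 := tsub_add_cancel_of_le (ha_le i)
          exact ENNReal.le_sub_of_add_le_left (measure_ne_top μ _) h3
        exact absurd hij (not_lt.mpr this)
      obtain ⟨n, hn⟩ := hex
      refine ⟨zseq n, zseq_lt_one n, fun _ ζ hζ1 hζ2 => ?_⟩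
      calc 1 - ∫⁻ ω, epow ζ (N j ω) ∂μ
          ≤ 1 - ∫⁻ ω, epow (zseq n) (N j ω) ∂μ :=
            tsub_le_tsub_left (lintegral_mono fun ω => epow_mono_left hζ1 (N j ω)) 1
        _ < a i := hn
        _ ≤ 1 - ∫⁻ ω, epow ζ (N i ω) ∂μ := lower i ζ hζ2.le
    · exact ⟨1 / 2, by norm_num, fun h => absurd h hij⟩
  choose g hg1 hg2 using pairbound
  refine ⟨max (1 / 2) (Finset.univ.sup fun p : Fin k × Fin k => g p.1 p.2), ?_, ?_, ?_⟩
  · exact lt_of_lt_of_le (by norm_num) (le_max_left _ _)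
  · refine max_lt (by norm_num) ?_
    rw [Finset.sup_lt_iff (by norm_num : (⊥ : ℝ≥0∞) < 1)]
    exact fun p _ => hg1 p.1 p.2
  · intro ζ hζ0 hζ1 j hmax i
    by_contra hcon
    push_neg at hcon
    have hgle : g i j ≤ ζ := by
      refine le_trans ?_ hζ0
      refine le_trans ?_ (le_max_right _ _)
      exact Finset.le_sup (f := fun p : Fin k × Fin k => g p.1 p.2)
        (Finset.mem_univ (i, j))
    exact absurd (hmax i) (not_le.mpr (hg2 i j hcon ζ hgle hζ1))
end
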